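/- Let G be a flow graph with start vertex s, dominator tree D, and low-high order delta, and let B and R be the strongly divergent spanning trees derived from delta (with b(v) = d(v) if (d(v),v) ∈ E else b(v) = low(v); r(v) = d(v) if (d(v),v) ∈ E else r(v) = high(v)). Then for any two vertices v, w with v <_delta w, the path from s to v in B and the path from s to w in R intersect exactly in the set of common dominators of v and w, i.e., B[s,v] ∩ R[s,w] = D[s,v] ∩ D[s,w]. -/

import Mathlib

open scoped Classical

namespace Dominators

variable {V : Type*}

/-- A walk in a digraph `E` from `u` to `w`, recorded as the list of its vertices. -/
inductive Walk (E : V → V → Prop) : V → V → List V → Prop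
  | nil (v : V) : Walk E v v [v]
  | cons {u v w : V} {p : List V} (h : E u v) (hw : Walk E v w p) : Walk E u w (u :: p)

/-- `v` is reachable from `s` in the flow graph `(E, s)`. -/
def Reachable (E : V → V → Prop) (s v : V) : Prop := ∃ p, Walk E s v p

/-- `v` dominates `w` in the flow graph `(E, s)`: every walk from `s` to `w` contains `v`.
In the dominator tree `D`, `v` is an ancestor of `w` iff `v` dominates `w`. -/
def Dom (E : V → V → Prop) (s v w : V) : Prop := ∀ p, Walk E s w p → v ∈ p

/-- `v` is the immediate dominator of `w` (the parent of `w` in the dominator tree):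
a proper dominator of `w` that is dominated by every proper dominator of `w`. -/
def IsIdom (E : V → V → Prop) (s v w : V) : Prop :=
  v ≠ w ∧ Dom E s v w ∧ ∀ u, u ≠ w → Dom E s u w → Dom E s u v

/-- `z` is the nearest common ancestor of `x` and `y` in the dominator tree of `(E, s)`. -/
def IsNca (E : V → V → Prop) (s z x y : V) : Prop :=
  Dom E s z x ∧ Dom E s z y ∧ ∀ u, Dom E s u x → Dom E s u y → Dom E s u z

/-- The graph obtained from `E` by inserting the edge `(x, y)`. -/
def Ins (E : V → V → Prop) (x y : V) : V → V → Prop := fun a b => E a b ∨ (a = x ∧ b = y)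

/-- `v` is affected by the insertion of edge `(x, y)`: its immediate dominator
(parent in the dominator tree) changes. -/
def Affected (E : V → V → Prop) (s x y v : V) : Prop :=
  ∃ a b, IsIdom E s a v ∧ IsIdom (Ins E x y) s b v ∧ a ≠ b

/-- `depth` is a depth function for the dominator tree of `(E, s)`. -/
def IsDepth (E : V → V → Prop) (s : V) (depth : V → ℕ) : Prop :=
  depth s = 0 ∧ ∀ v u, Reachable E s v → v ≠ s → IsIdom E s u v → depth v = depth u + 1

/-- `δ` is a preorder of the dominator tree of `(E, s)`: it is injective on reachable
vertices, every vertex precedes (or equals) its descendants, and the descendants of every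
vertex are consecutive. -/
def IsPreorderOfD (E : V → V → Prop) (s : V) (δ : V → ℕ) : Prop :=
  (∀ u v, Reachable E s u → Reachable E s v → u ≠ v → δ u ≠ δ v) ∧
  (∀ v u, Reachable E s u → Dom E s v u → δ v ≤ δ u) ∧
  (∀ v a b, Reachable E s b → Dom E s v a → δ v ≤ δ b → δ b ≤ δ a → Dom E s v b)

/-- `δ` is a low-high order for the vertex `v` in `(E, s)`: either the edge from the
parent `d(v)` of `v` in the dominator tree is in `E`, or `v` has two entering edges
`(u, v)` and `(w, v)` with `u`, `w` reachable, `u <_δ v <_δ w`, and `w` not a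
descendant of `v` in the dominator tree. -/
def LowHighFor (E : V → V → Prop) (s : V) (δ : V → ℕ) (v : V) : Prop :=
  (∃ q, IsIdom E s q v ∧ E q v) ∨
  ∃ u w, E u v ∧ E w v ∧ Reachable E s u ∧ Reachable E s w ∧
    δ u < δ v ∧ δ v < δ w ∧ ¬ Dom E s v w

/-- `δ` is a low-high order of the flow graph `(E, s)`. -/
def IsLowHigh (E : V → V → Prop) (s : V) (δ : V → ℕ) : Prop :=
  IsPreorderOfD E s δ ∧ ∀ v, Reachable E s v → v ≠ s → LowHighFor E s δ v

/-- The edge relation of the spanning tree with parent function `par`, rooted at `s`,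
on the vertices reachable in `(E, s)`. -/
def TreeRel (E : V → V → Prop) (s : V) (par : V → V) : V → V → Prop :=
  fun a b => Reachable E s b ∧ b ≠ s ∧ par b = a

/-- `par` is (the parent function of) a spanning tree of the flow graph `(E, s)`. -/
def IsSpanningTree (E : V → V → Prop) (s : V) (par : V → V) : Prop :=
  (∀ v, Reachable E s v → v ≠ s → E (par v) v) ∧
  (∀ v, Reachable E s v → ∃ p, Walk (TreeRel E s par) s v p)

/-- The spanning trees with parent functions `b` and `r` are divergent: for every
reachable `v`, the tree paths from `s` to `v` share only the dominators of `v`. -/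
def Divergent (E : V → V → Prop) (s : V) (b r : V → V) : Prop :=
  ∀ v p q, Reachable E s v → Walk (TreeRel E s b) s v p → Walk (TreeRel E s r) s v q →
    ∀ u, u ∈ p → u ∈ q → Dom E s u v

theorem walk_head {E : V → V → Prop} {x v : V} {p : List V} (h : Walk E x v p) : x ∈ p := by
  cases h with
  | nil => exact List.mem_singleton_self _
  | cons h hw => exact List.mem_cons_self

theorem walk_last {E : V → V → Prop} {x v : V} {p : List V} (h : Walk E x v p) : v ∈ p := by
  induction h with
  | nil => exact List.mem_singleton_self _
  | cons h hw ih => exact List.mem_cons_of_mem _ ih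

theorem walk_mono {E F : V → V → Prop} (hEF : ∀ a b, E a b → F a b) {x v : V} {p : List V}
    (h : Walk E x v p) : Walk F x v p := by
  induction h with
  | nil v => exact Walk.nil v
  | cons h hw ih => exact Walk.cons (hEF _ _ h) ih

theorem walk_prefix {E : V → V → Prop} {x v : V} {p : List V} (h : Walk E x v p) :
    ∀ u ∈ p, ∃ q, Walk E x u q ∧ ∀ z ∈ q, z ∈ p := by
  induction h with
  | nil v =>
    intro u hu
    rw [List.mem_singleton] at hu
    subst hu
    exact ⟨[u], Walk.nil u, fun z hz => hz⟩
  | cons h hw ih =>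
    intro u hu
    rcases List.mem_cons.mp hu with h1 | h2
    · subst h1
      refine ⟨[u], Walk.nil u, fun z hz => ?_⟩
      rw [List.mem_singleton] at hz
      subst hz
      exact List.mem_cons_self
    · obtain ⟨q, hq, hsub⟩ := ih u h2
      refine ⟨_ :: q, Walk.cons h hq, fun z hz => ?_⟩
      rcases List.mem_cons.mp hz with h3 | h4
      · subst h3; exact List.mem_cons_self
      · exact List.mem_cons_of_mem _ (hsub z h4)

theorem dom_self {E : V → V → Prop} {s w : V} : Dom E s w w :=
  fun _ hp => walk_last hp

theorem dom_trans {E : V → V → Prop} {s a b c : V} (hab : Dom E s a b) (hbc : Dom E s b c) :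
    Dom E s a c := by
  intro p hp
  obtain ⟨q, hq, hsub⟩ := walk_prefix hp b (hbc p hp)
  exact hsub a (hab q hq)

theorem dom_reachable {E : V → V → Prop} {s u v : V} (h : Dom E s u v)
    (hv : Reachable E s v) : Reachable E s u := by
  obtain ⟨p, hp⟩ := hv
  obtain ⟨q, hq, _⟩ := walk_prefix hp u (h p hp)
  exact ⟨q, hq⟩

/-- Let `δ` be a low-high order of `(G, s)` (with witnesses `low`,
`high`) and let `B`, `R` be the spanning trees with parent functions
`b v = d v` if `(d v, v) ∈ E` else `low v`, and `r v = d v` if `(d v, v) ∈ E` else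
`high v`. Then for any two vertices `v`, `w` with `δ v < δ w`, the path from `s` to `v`
in `B` and the path from `s` to `w` in `R` intersect exactly in the common dominators
of `v` and `w`. -/
theorem stmt14 (E : V → V → Prop) (s : V) (d low high b r : V → V) (δ : V → ℕ)
    (hd : ∀ v, Reachable E s v → v ≠ s → IsIdom E s (d v) v)
    (hδ : IsPreorderOfD E s δ)
    (hlow : ∀ v, Reachable E s v → v ≠ s → ¬ E (d v) v →
      E (low v) v ∧ low v ≠ d v ∧ Reachable E s (low v) ∧ δ (low v) < δ v)
    (hhigh : ∀ v, Reachable E s v → v ≠ s → ¬ E (d v) v →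
      E (high v) v ∧ Reachable E s (high v) ∧ δ v < δ (high v) ∧ ¬ Dom E s v (high v))
    (hb : ∀ v, b v = if E (d v) v then d v else low v)
    (hr : ∀ v, r v = if E (d v) v then d v else high v)
    (hB : IsSpanningTree E s b) (hR : IsSpanningTree E s r) :
    ∀ v w, Reachable E s v → Reachable E s w → δ v < δ w →
      ∀ p q, Walk (TreeRel E s b) s v p → Walk (TreeRel E s r) s w q →
        ∀ u, (u ∈ p ∧ u ∈ q) ↔ (Dom E s u v ∧ Dom E s u w) := by
  -- δ of the B-parent is strictly smaller
  have hbdec : ∀ y, Reachable E s y → y ≠ s → δ (b y) < δ y := by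
    intro y hry hys
    by_cases hE : E (d y) y
    · rw [hb y, if_pos hE]
      obtain ⟨hne, hdom, -⟩ := hd y hry hys
      have hle : δ (d y) ≤ δ y := hδ.2.1 (d y) y hry hdom
      have hner : δ (d y) ≠ δ y := hδ.1 (d y) y (dom_reachable hdom hry) hry hne
      exact lt_of_le_of_ne hle hner
    · rw [hb y, if_neg hE]
      exact (hlow y hry hys hE).2.2.2
  -- along a B-tree walk, δ is bounded by δ of the endpoint
  have key_b : ∀ x v p, Walk (TreeRel E s b) x v p → ∀ u ∈ p, δ u ≤ δ v := by
    intro x v p hwalk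
    induction hwalk with
    | nil z =>
      intro u hu
      rw [List.mem_singleton] at hu
      subst hu
      exact le_refl _
    | cons h hw ih =>
      intro u hu
      rcases List.mem_cons.mp hu with h1 | h2
      · subst h1
        obtain ⟨hry, hys, hby⟩ := h
        have h3 := ih _ (walk_head hw)
        have h4 := hbdec _ hry hys
        rw [hby] at h4
        exact le_of_lt (lt_of_lt_of_le h4 h3)
      · exact ih u h2
  -- on an R-tree walk to w, every vertex dominates w or lies strictly after w
  have key_r : ∀ x w q, Walk (TreeRel E s r) x w q → Reachable E s w →
      ∀ u ∈ q, Dom E s u w ∨ (δ w < δ u ∧ ¬ Dom E s w u) := by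
    intro x w q hwalk
    induction hwalk with
    | nil z =>
      intro _ u hu
      rw [List.mem_singleton] at hu
      subst hu
      exact Or.inl dom_self
    | @cons x y w' p' h hw ih =>
      intro hreach u hu
      rcases List.mem_cons.mp hu with h1 | h2
      · subst h1
        obtain ⟨hry, hys, hruy⟩ := h
        have hy := ih hreach y (walk_head hw)
        obtain ⟨hne, hdomdy, -⟩ := hd y hry hys
        by_cases hE : E (d y) y
        · rw [hr y, if_pos hE] at hruy
          subst hruy
          rcases hy with hdyw | ⟨hlt, hnd⟩
          · exact Or.inl (dom_trans hdomdy hdyw)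
          · by_cases hle : δ (d y) ≤ δ w'
            · exact Or.inl (hδ.2.2 (d y) y w' hreach hdomdy hle (le_of_lt hlt))
            · refine Or.inr ⟨lt_of_not_ge hle, fun hc => hnd (dom_trans hc hdomdy)⟩
        · rw [hr y, if_neg hE] at hruy
          subst hruy
          obtain ⟨hEh, hreachh, hlth, hndh⟩ := hhigh y hry hys hE
          rcases hy with hdyw | ⟨hlt2, hnd2⟩
          · by_cases hle : δ (high y) ≤ δ w'
            · exact absurd (hδ.2.2 y w' (high y) hreachh hdyw (le_of_lt hlth) hle) hndh
            · exact Or.inr ⟨lt_of_not_ge hle, fun hc => hndh (dom_trans hdyw hc)⟩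
          · refine Or.inr ⟨lt_trans hlt2 hlth, fun hc => ?_⟩
            exact hnd2 (hδ.2.2 w' (high y) y hry hc (le_of_lt hlt2) (le_of_lt hlth))
      · exact ih hreach u h2
  intro v w hv hw hvw p q hp hq u
  constructor
  · rintro ⟨hup, huq⟩
    have h1 : δ u ≤ δ v := key_b s v p hp u hup
    have h2 := key_r s w q hq hw u huq
    have hduw : Dom E s u w := by
      rcases h2 with h2 | ⟨h2, -⟩
      · exact h2
      · omega
    exact ⟨hδ.2.2 u w v hv hduw h1 (le_of_lt hvw), hduw⟩
  · rintro ⟨hduv, hduw⟩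
    have hpE : Walk E s v p :=
      walk_mono (fun a c h => h.2.2 ▸ hB.1 c h.1 h.2.1) hp
    have hqE : Walk E s w q :=
      walk_mono (fun a c h => h.2.2 ▸ hR.1 c h.1 h.2.1) hq
    exact ⟨hduv p hpE, hduw q hqE⟩

end Dominators
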